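/- arXiv:1811.05077 — 2 statements merged into one kernel-verified Lean document; each statement's English description precedes it below -/
import Mathlib

section
/- The third computation stage needs only local data and received first-stage data: for every process p, if t ∈ L3 p and pred t' t, then t' ∈ L0 p ∪ L4 p ∪ L3 p ∪ ⋃_{q ≠ p} L1 q. In particular, after receiving the sets L1 q from the other processes, all of L3 p can be computed without further communication. -/
/-- The locally computable tasks: the least subset `S` of `T` such that
whenever `t ∈ Lp` and every predecessor `t'` of `t` lies in `A ∪ S`
(stated positively: every predecessor not in `A` lies in `S`),
then `t ∈ S`. Here `Lp` is the local task set and `A` the initially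
available data. -/
inductive LocComp {T : Type*} (pred : T → T → Prop) (Lp A : Set T) : T → Prop
  | step {t : T} (ht : t ∈ Lp)
      (h : ∀ t', pred t' t → t' ∉ A → LocComp pred Lp A t') : LocComp pred Lp A t

variable {T P : Type*}

/-- `L4 p`: tasks of `L p` computable from the initial data `L0 p` of `p` alone. -/
def L4 (pred : T → T → Prop) (L L0 : P → Set T) (p : P) : Set T :=
  {t | LocComp pred (L p) (L0 p) t}

/-- `L5 p`: all tasks needed, directly or indirectly, for the local result `L p`. -/
def L5 (pred : T → T → Prop) (L : P → Set T) (p : P) : Set T :=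
  {t' | ∃ t ∈ L p, Relation.ReflTransGen pred t' t}

/-- `L1 p`: locally computable tasks of `p` needed by some other process. -/
def L1 (pred : T → T → Prop) (L L0 : P → Set T) (p : P) : Set T :=
  (L4 pred L L0 p ∩ ⋃ (q) (_ : q ≠ p), L5 pred L q) \ L0 p

/-- `L2 p`: locally computable tasks used only locally. -/
def L2 (pred : T → T → Prop) (L L0 : P → Set T) (p : P) : Set T :=
  L4 pred L L0 p \ L1 pred L L0 p

/-- `L3 p`: remaining tasks needed for the local result, computed after
receiving the sets `L1 q` from other processes. -/
def L3 (pred : T → T → Prop) (L L0 : P → Set T) (p : P) : Set T :=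
  (L5 pred L p \ L4 pred L L0 p) \ ⋃ (q) (_ : q ≠ p), L1 pred L L0 q

theorem stmt_6 (pred : T → T → Prop) (L L0 : P → Set T) (p : P)
    (t t' : T) (ht : t ∈ L3 pred L L0 p) (h : pred t' t) :
    t' ∈ L0 p ∪ L4 pred L L0 p ∪ L3 pred L L0 p ∪
      ⋃ (q) (_ : q ≠ p), L1 pred L L0 q := by
  obtain ⟨⟨ht5, ht4⟩, htU⟩ := ht
  have ht'5 : t' ∈ L5 pred L p := by
    obtain ⟨u, hu, hru⟩ := ht5
    exact ⟨u, hu, Relation.ReflTransGen.head h hru⟩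
  by_cases h4 : t' ∈ L4 pred L L0 p
  · exact Or.inl (Or.inl (Or.inr h4))
  by_cases hU : t' ∈ ⋃ (q) (_ : q ≠ p), L1 pred L L0 q
  · exact Or.inr hU
  · exact Or.inl (Or.inr ⟨⟨ht'5, h4⟩, hU⟩)
end

section
/- Characterization of locally computable tasks under well-foundedness: assume the predecessor relation pred is well-founded. Then for every process p and task t, t ∈ L4 p if and only if t ∈ L p and every t' reachable from t by the reflexive-transitive closure of the restricted relation R, where R a b holds iff pred a b and a ∉ L0 p, satisfies t' ∈ L p. -/
variable {T P : Type*}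

theorem stmt_14 (pred : T → T → Prop) (L L0 : P → Set T)
    (hwf : WellFounded pred) (p : P) (t : T) :
    t ∈ L4 pred L L0 p ↔
      t ∈ L p ∧ ∀ t',
        Relation.ReflTransGen (fun a b => pred a b ∧ a ∉ L0 p) t' t →
          t' ∈ L p := by
  constructor
  · intro h
    refine ⟨by cases h with | step ht _ => exact ht, ?_⟩
    induction h with
    | step ht h ih =>
      intro t' hrt
      rcases hrt.cases_tail with heq | ⟨c, hc, hR⟩
      · exact heq ▸ ht
      · exact ih c hR.1 hR.2 t' hc
  · intro ⟨ht, hcl⟩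
    induction t using hwf.induction with
    | _ t ih =>
      exact LocComp.step ht fun t' hp hA =>
        ih t' hp (hcl t' (Relation.ReflTransGen.single ⟨hp, hA⟩))
          fun s hs => hcl s (hs.tail ⟨hp, hA⟩)
end
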